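/- arXiv:1403.6062 — 2 statements merged into one kernel-verified Lean document; each statement's English description precedes it below -/
import Mathlib

section
/- Let r ≥ 2, let I ⊆ ℝ be an open interval, and let T, X₁, X₀ : I → ℝ be smooth with T'(t)X₁(t) ≠ 0 for all t ∈ I. Suppose that for every r-th order linear ODE E on I of first Arnold form (coefficient a₀ ≡ 0, arbitrary smooth a₁, …, a_{r−1}, b) there exists an r-th order linear ODE Ẽ on T(I) of first Arnold form (ã₀ ≡ 0) such that the fiber-preserving transformation t̃ = T(t), x̃ = X₁(t)x + X₀(t) maps E to Ẽ. Then X₁ is a (nonzero) constant function. (The equivalence group of the class of r-th order linear ODEs in first Arnold form consists of transformations t̃ = T(t), x̃ = Cx + X₀(t).) -/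
open Set Polynomial Filter

/-- The left-hand side `x^(r)(t) + ∑_{i<r} aᵢ(t) x^(i)(t)` of an `r`-th order linear ODE. -/
noncomputable def odeLHS (r : ℕ) (a : ℕ → ℝ → ℝ) (x : ℝ → ℝ) (t : ℝ) : ℝ :=
  iteratedDeriv r x t + ∑ i ∈ Finset.range r, a i t * iteratedDeriv i x t

/-- `x` is a solution on `I` of the linear ODE `x^(r) + ∑_{i<r} aᵢ x^(i) = b`:
it is smooth on `I` and satisfies the identity on `I`. -/
def IsSolODE (r : ℕ) (a : ℕ → ℝ → ℝ) (b : ℝ → ℝ) (I : Set ℝ) (x : ℝ → ℝ) : Prop :=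
  ContDiffOn ℝ (⊤ : ℕ∞) x I ∧ ∀ t ∈ I, odeLHS r a x t = b t

/-- `I ⊆ ℝ` is a (nonempty) open interval. -/
def IsOpenInterval (I : Set ℝ) : Prop := IsOpen I ∧ I.OrdConnected ∧ I.Nonempty

/-- The fiber-preserving transformation `t̃ = T(t)`, `x̃ = X₁(t)x + X₀(t)` maps the
`r`-th order linear ODE with coefficients `a`, `b` on `I` to the one with coefficients
`a'`, `b'` on `T(I)`: for every solution `x` of the source equation the function
`y(s) = X₁(T⁻¹(s))x(T⁻¹(s)) + X₀(T⁻¹(s))` is a solution of the target equation. -/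
def FPMapsODE (r : ℕ) (I : Set ℝ) (a : ℕ → ℝ → ℝ) (b : ℝ → ℝ)
    (a' : ℕ → ℝ → ℝ) (b' : ℝ → ℝ) (T X₁ X₀ : ℝ → ℝ) : Prop :=
  ∀ x : ℝ → ℝ, IsSolODE r a b I x →
    ∃ y : ℝ → ℝ, IsSolODE r a' b' (T '' I) y ∧ ∀ t ∈ I, y (T t) = X₁ t * x t + X₀ t


lemma one_le_inftyS : (1 : WithTop ℕ∞) ≤ ((⊤:ℕ∞) : WithTop ℕ∞) := by exact_mod_cast le_top

lemma evEq_iteratedDeriv {f g : ℝ → ℝ} {s : ℝ} (h : f =ᶠ[nhds s] g) (n : ℕ) :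
    iteratedDeriv n f =ᶠ[nhds s] iteratedDeriv n g := by
  induction n with
  | zero => simpa using h
  | succ n ih => simpa only [iteratedDeriv_succ] using ih.deriv

lemma iteratedDeriv_congr_of_open {f g : ℝ → ℝ} {J : Set ℝ} (hJ : IsOpen J)
    (h : ∀ x ∈ J, f x = g x) (n : ℕ) {s : ℝ} (hs : s ∈ J) :
    iteratedDeriv n f s = iteratedDeriv n g s :=
  (evEq_iteratedDeriv (Filter.eventuallyEq_of_mem (hJ.mem_nhds hs) h) n).self_of_nhds

lemma contDiffOn_iteratedDeriv {f : ℝ → ℝ} {J : Set ℝ} (hJ : IsOpen J)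
    (hf : ContDiffOn ℝ (⊤ : ℕ∞) f J) (n : ℕ) : ContDiffOn ℝ (⊤ : ℕ∞) (iteratedDeriv n f) J := by
  induction n with
  | zero => simpa [iteratedDeriv_zero] using hf
  | succ n ih => rw [iteratedDeriv_succ]; exact ih.deriv_of_isOpen hJ (le_of_eq rfl)

lemma differentiableAt_iteratedDeriv {f : ℝ → ℝ} {J : Set ℝ} (hJ : IsOpen J)
    (hf : ContDiffOn ℝ (⊤ : ℕ∞) f J) (n : ℕ) {s : ℝ} (hs : s ∈ J) :
    DifferentiableAt ℝ (iteratedDeriv n f) s :=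
  (((contDiffOn_iteratedDeriv hJ hf n) s hs).contDiffAt (hJ.mem_nhds hs)).differentiableAt
    (by simp)

lemma differentiableAt_of_contDiffOn {f : ℝ → ℝ} {J : Set ℝ} (hJ : IsOpen J)
    (hf : ContDiffOn ℝ (⊤ : ℕ∞) f J) {s : ℝ} (hs : s ∈ J) :
    DifferentiableAt ℝ f s :=
  ((hf s hs).contDiffAt (hJ.mem_nhds hs)).differentiableAt (by simp)

lemma iteratedDeriv_sub_of_open {f g : ℝ → ℝ} {J : Set ℝ} (hJ : IsOpen J)
    (hf : ContDiffOn ℝ (⊤ : ℕ∞) f J) (hg : ContDiffOn ℝ (⊤ : ℕ∞) g J) (n : ℕ) :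
    ∀ s ∈ J, iteratedDeriv n (fun t => f t - g t) s = iteratedDeriv n f s - iteratedDeriv n g s := by
  induction n with
  | zero => intro s hs; simp
  | succ n ih =>
    intro s hs
    rw [iteratedDeriv_succ, iteratedDeriv_succ, iteratedDeriv_succ]
    have h1 : deriv (iteratedDeriv n (fun t => f t - g t)) s
        = deriv (fun t => iteratedDeriv n f t - iteratedDeriv n g t) s :=
      Filter.EventuallyEq.deriv_eq (Filter.eventuallyEq_of_mem (hJ.mem_nhds hs) ih)
    rw [h1, deriv_fun_sub (differentiableAt_iteratedDeriv hJ hf n hs)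
      (differentiableAt_iteratedDeriv hJ hg n hs)]

lemma iteratedDeriv_exp_mul (c : ℝ) (n : ℕ) :
    iteratedDeriv n (fun t => Real.exp (c * t)) = fun t => c ^ n * Real.exp (c * t) := by
  induction n with
  | zero => funext t; simp
  | succ n ih =>
    rw [iteratedDeriv_succ, ih]
    funext t
    have hE : HasDerivAt (fun t : ℝ => Real.exp (c * t)) (c * Real.exp (c * t)) t := by
      simpa [mul_comm, Function.comp_def] using (Real.hasDerivAt_exp (c * t)).comp t ((hasDerivAt_id t).const_mul c)
    have h : HasDerivAt (fun t : ℝ => c ^ n * Real.exp (c * t))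
        (c ^ n * (c * Real.exp (c * t))) t := hE.const_mul _
    rw [h.deriv]; ring

lemma iteratedDeriv_zero_fun (n : ℕ) :
    iteratedDeriv n (fun _ : ℝ => (0:ℝ)) = fun _ => (0:ℝ) := by
  induction n with
  | zero => simp [iteratedDeriv_zero]
  | succ n ih => rw [iteratedDeriv_succ, ih]; funext t; simp


noncomputable def PK (K : Finset ℕ) : Polynomial ℝ := X * ∏ ν ∈ K, (X - C (ν:ℝ))

lemma PK_monic (K : Finset ℕ) : (PK K).Monic :=
  monic_X.mul (monic_prod_of_monic _ _ fun ν _ => monic_X_sub_C _)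

lemma PK_natDegree (K : Finset ℕ) : (PK K).natDegree = 1 + K.card := by
  rw [PK, Monic.natDegree_mul monic_X (monic_prod_of_monic _ _ fun ν _ => monic_X_sub_C _),
    natDegree_X, natDegree_prod_of_monic _ _ (fun ν _ => monic_X_sub_C _)]
  simp only [natDegree_X_sub_C]
  simp

lemma PK_eval_zero (K : Finset ℕ) : (PK K).eval 0 = 0 := by simp [PK]

lemma PK_eval_mem (K : Finset ℕ) {ν : ℕ} (hν : ν ∈ K) : (PK K).eval (ν:ℝ) = 0 := by
  rw [PK, eval_mul, eval_prod]
  rw [Finset.prod_eq_zero hν (by simp)]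
  ring

lemma PK_mem_span (r : ℕ) (W : Submodule ℝ (Polynomial ℝ))
    (hgen : ∀ K : Finset ℕ, 0 ∉ K → K.card = r - 1 → PK K ∈ W) :
    ∀ m : ℕ, ∀ K : Finset ℕ, 0 ∉ K → K.card + m = r - 1 → PK K ∈ W := by
  intro m
  induction m with
  | zero => intro K h0 hc; exact hgen K h0 (by omega)
  | succ m ih =>
    intro K h0 hc
    set a := K.sup id + 1 with ha
    have haK : a ∉ K := by
      intro h
      have := Finset.le_sup (f := id) h
      simp only [id] at this; omega
    have haK2 : a + 1 ∉ K := by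
      intro h
      have := Finset.le_sup (f := id) h
      simp only [id] at this; omega
    have h0a : (0:ℕ) ∉ insert a K := by
      simp only [Finset.mem_insert]; push_neg; exact ⟨by omega, h0⟩
    have h0a2 : (0:ℕ) ∉ insert (a+1) K := by
      simp only [Finset.mem_insert]; push_neg; exact ⟨by omega, h0⟩
    have h1 : PK (insert a K) ∈ W := by
      refine ih _ h0a ?_
      rw [Finset.card_insert_of_notMem haK]; omega
    have h2 : PK (insert (a+1) K) ∈ W := by
      refine ih _ h0a2 ?_
      rw [Finset.card_insert_of_notMem haK2]; omega
    have hrw : PK K = PK (insert a K) - PK (insert (a+1) K) := by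
      rw [PK, PK, PK, Finset.prod_insert haK, Finset.prod_insert haK2]
      have : ((a+1 : ℕ) : ℝ) = (a:ℝ) + 1 := by push_cast; ring
      rw [this, map_add, map_one]
      ring
    rw [hrw]
    exact W.sub_mem h1 h2

lemma X_pow_mem_span (r : ℕ) (W : Submodule ℝ (Polynomial ℝ))
    (hPK : ∀ K : Finset ℕ, 0 ∉ K → K.card ≤ r - 1 → PK K ∈ W) :
    ∀ m : ℕ, 1 ≤ m → m ≤ r → (X : Polynomial ℝ) ^ m ∈ W := by
  intro m
  induction m using Nat.strong_induction_on with
  | _ m ih =>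
    intro h1 h2
    set K := Finset.Icc 1 (m-1) with hK
    have h0K : 0 ∉ K := by simp [hK]
    have hcard : K.card = m - 1 := by rw [hK, Nat.card_Icc]; omega
    have hP : PK K ∈ W := hPK K h0K (by omega)
    have hdeg : (PK K).natDegree = m := by rw [PK_natDegree, hcard]; omega
    have hsum : PK K = ∑ l ∈ Finset.range (m+1), C ((PK K).coeff l) * X ^ l := by
      conv_lhs => rw [(PK K).as_sum_range_C_mul_X_pow, hdeg]
    have hcm : (PK K).coeff m = 1 := by
      have := (PK_monic K).coeff_natDegree
      rwa [hdeg] at this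
    have hXm : (X : Polynomial ℝ) ^ m
        = PK K - ∑ l ∈ Finset.range m, C ((PK K).coeff l) * X ^ l := by
      have h3 : PK K - ∑ l ∈ Finset.range m, C ((PK K).coeff l) * X ^ l
          = (∑ l ∈ Finset.range (m+1), C ((PK K).coeff l) * X ^ l)
            - ∑ l ∈ Finset.range m, C ((PK K).coeff l) * X ^ l := by rw [← hsum]
      rw [h3, Finset.sum_range_succ, hcm, map_one, one_mul]
      ring
    rw [hXm]
    refine W.sub_mem hP (Submodule.sum_mem _ fun l hl => ?_)
    simp only [Finset.mem_range] at hl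
    rcases Nat.eq_zero_or_pos l with rfl | hl1
    · have : (PK K).coeff 0 = 0 := by rw [coeff_zero_eq_eval_zero, PK_eval_zero]
      simp [this]
    · rw [← smul_eq_C_mul]
      exact W.smul_mem _ (ih l hl hl1 (by omega))

lemma core_lemma (r : ℕ) (hr : 2 ≤ r) (φ : ℕ → ℕ → ℝ) (ws : ℝ) (hws : ws ≠ 0)
    (htri : ∀ i j, i < j → φ i j = 0) (hdiag : φ r r ≠ 0)
    (hyp : ∀ K : Finset ℕ, 0 ∉ K → K.card = r - 1 →
      ∃ ab : ℕ → ℝ, ab r = 1 ∧ ∀ ν ∈ insert 0 K,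
        ∑ j ∈ Finset.range (r+1), (ν.descFactorial j : ℝ) * ws ^ (ν - j) *
          (∑ i ∈ Finset.Icc 1 r, ab i * φ i j) = 0) :
    φ 1 0 = 0 := by
  classical
  set G : ℕ → Polynomial ℝ :=
    fun i => ∑ j ∈ Finset.range (r+1), C (ws⁻¹ ^ j * φ i j) * descPochhammer ℝ j with hG
  set W : Submodule ℝ (Polynomial ℝ) :=
    Submodule.span ℝ (Set.range fun i : Fin r => G ((i:ℕ)+1)) with hW
  have hGmem : ∀ i, 1 ≤ i → i ≤ r → G i ∈ W := by
    intro i h1 h2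
    have : G i = (fun i : Fin r => G ((i:ℕ)+1)) ⟨i-1, by omega⟩ := by
      simp only []
      congr 1
      omega
    rw [this, hW]
    exact Submodule.subset_span (Set.mem_range_self _)
  -- degree bound
  have hGdeg : ∀ i, (G i).natDegree ≤ r := by
    intro i
    refine Polynomial.natDegree_sum_le_of_forall_le _ _ fun j hj => ?_
    refine le_trans (natDegree_C_mul_le _ _) ?_
    rw [descPochhammer_natDegree]
    simp only [Finset.mem_range] at hj
    omega
  -- coeff r
  have hGcoeff : ∀ i, (G i).coeff r = ws⁻¹ ^ r * φ i r := by
    intro i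
    rw [hG]
    simp only []
    rw [finset_sum_coeff]
    rw [Finset.sum_eq_single r]
    · have hmon := (monic_descPochhammer ℝ r).coeff_natDegree
      rw [descPochhammer_natDegree] at hmon
      rw [coeff_C_mul, hmon, mul_one]
    · intro j hj hjr
      simp only [Finset.mem_range] at hj
      rw [coeff_C_mul, coeff_eq_zero_of_natDegree_lt (by rw [descPochhammer_natDegree]; omega),
        mul_zero]
    · intro h
      exact absurd (Finset.mem_range.2 (by omega)) h
  -- eval
  have hGev : ∀ i (ν : ℕ), (G i).eval ((ν:ℕ):ℝ)
      = ∑ j ∈ Finset.range (r+1), ws⁻¹ ^ j * φ i j * (ν.descFactorial j : ℝ) := by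
    intro i ν
    rw [hG]
    simp only []
    rw [eval_finset_sum]
    refine Finset.sum_congr rfl fun j _ => ?_
    rw [eval_mul, eval_C, descPochhammer_eval_eq_descFactorial]
  have key : ∀ (ν j : ℕ), (ν.descFactorial j : ℝ) * ws⁻¹ ^ j * ws ^ ν
      = (ν.descFactorial j : ℝ) * ws ^ (ν - j) := by
    intro ν j
    rcases le_or_gt j ν with h | h
    · rw [pow_sub₀ ws hws h, inv_pow]
      ring
    · rw [Nat.descFactorial_eq_zero_iff_lt.mpr h]
      simp
  -- main membership
  have hPKmem : ∀ K : Finset ℕ, 0 ∉ K → K.card = r - 1 → PK K ∈ W := by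
    intro K h0 hc
    obtain ⟨ab, habr, hconstr⟩ := hyp K h0 hc
    set g : Polynomial ℝ := ∑ i ∈ Finset.Icc 1 r, C (ab i) * G i with hg
    have hgW : g ∈ W := by
      refine Submodule.sum_mem _ fun i hi => ?_
      simp only [Finset.mem_Icc] at hi
      rw [← smul_eq_C_mul]
      exact W.smul_mem _ (hGmem i hi.1 hi.2)
    have heval : ∀ ν ∈ insert 0 K, g.eval ((ν:ℕ):ℝ) = 0 := by
      intro ν hν
      have h0c := hconstr ν hν
      have e1 : g.eval ((ν:ℕ):ℝ) * ws ^ ν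
          = ∑ i ∈ Finset.Icc 1 r, ∑ j ∈ Finset.range (r+1),
              ab i * φ i j * ((ν.descFactorial j : ℝ) * ws ^ (ν - j)) := by
        rw [hg, eval_finset_sum, Finset.sum_mul]
        refine Finset.sum_congr rfl fun i _ => ?_
        rw [eval_mul, eval_C, hGev i ν, Finset.mul_sum, Finset.sum_mul]
        refine Finset.sum_congr rfl fun j _ => ?_
        linear_combination (ab i * φ i j) * key ν j
      have e2 : ∑ j ∈ Finset.range (r+1), (ν.descFactorial j : ℝ) * ws ^ (ν - j) *
            (∑ i ∈ Finset.Icc 1 r, ab i * φ i j)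
          = ∑ i ∈ Finset.Icc 1 r, ∑ j ∈ Finset.range (r+1),
              ab i * φ i j * ((ν.descFactorial j : ℝ) * ws ^ (ν - j)) := by
        rw [Finset.sum_comm]
        refine Finset.sum_congr rfl fun i _ => ?_
        rw [Finset.mul_sum]
        refine Finset.sum_congr rfl fun j _ => ?_
        ring
      have : g.eval ((ν:ℕ):ℝ) * ws ^ ν = 0 := by rw [e1, ← e2, h0c]
      exact (mul_eq_zero.1 this).resolve_right (pow_ne_zero _ hws)
    have hgcoeff : g.coeff r = ws⁻¹ ^ r * φ r r := by
      rw [hg, finset_sum_coeff]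
      rw [Finset.sum_eq_single r]
      · rw [coeff_C_mul, hGcoeff, habr, one_mul]
      · intro i hi hir
        simp only [Finset.mem_Icc] at hi
        rw [coeff_C_mul, hGcoeff, htri i r (by omega), mul_zero, mul_zero]
      · intro h
        exact absurd (Finset.mem_Icc.2 ⟨by omega, le_refl r⟩) h
    have hgdeg : g.natDegree ≤ r := by
      refine Polynomial.natDegree_sum_le_of_forall_le _ _ fun i _ => ?_
      exact le_trans (natDegree_C_mul_le _ _) (hGdeg i)
    set c : ℝ := ws⁻¹ ^ r * φ r r with hc'
    have hcne : c ≠ 0 := mul_ne_zero (pow_ne_zero _ (inv_ne_zero hws)) hdiag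
    have hPdeg : (PK K).natDegree = r := by rw [PK_natDegree, hc]; omega
    set h : Polynomial ℝ := g - C c * PK K with hh
    have hhdeg : h.natDegree ≤ r - 1 := by
      rw [natDegree_le_iff_coeff_eq_zero]
      intro N hN
      rcases Nat.lt_or_ge N r with h1 | h1
      · omega
      rcases Nat.eq_or_lt_of_le h1 with rfl | h2
      · rw [hh, coeff_sub, hgcoeff, coeff_C_mul, ← hPdeg, (PK_monic K).coeff_natDegree]
        rw [hc']
        ring
      · rw [hh, coeff_sub, coeff_eq_zero_of_natDegree_lt (lt_of_le_of_lt hgdeg h2),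
          coeff_C_mul, coeff_eq_zero_of_natDegree_lt (by omega)]
        ring
    set S : Finset ℝ := insert (0:ℝ) (K.image (fun ν : ℕ => (ν:ℝ))) with hS
    have hScard : S.card = r := by
      rw [hS, Finset.card_insert_of_notMem, Finset.card_image_of_injective _ Nat.cast_injective]
      · omega
      · intro hmem
        simp only [Finset.mem_image] at hmem
        obtain ⟨ν, hν, hcast⟩ := hmem
        have : ν = 0 := Nat.cast_eq_zero.mp hcast
        exact h0 (this ▸ hν)
    have hhzero : h = 0 := by
      refine Polynomial.eq_zero_of_natDegree_lt_card_of_eval_eq_zero' h S ?_ (by omega)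
      intro x hx
      rw [hS] at hx
      simp only [Finset.mem_insert, Finset.mem_image] at hx
      rcases hx with rfl | ⟨ν, hν, rfl⟩
      · have := heval 0 (Finset.mem_insert_self 0 K)
        rw [hh, eval_sub, eval_mul, eval_C, PK_eval_zero]
        simp only [Nat.cast_zero] at this
        rw [this]; ring
      · have := heval ν (Finset.mem_insert_of_mem hν)
        rw [hh, eval_sub, eval_mul, eval_C, PK_eval_mem K hν, this]
        ring
    have : PK K = c⁻¹ • g := by
      have h4 : g = C c * PK K := by
        have := sub_eq_zero.mp (hh ▸ hhzero)
        exact this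
      rw [h4, smul_eq_C_mul, ← mul_assoc, ← map_mul, inv_mul_cancel₀ hcne, map_one, one_mul]
    rw [this]
    exact W.smul_mem _ hgW
  -- all smaller K
  have hPKall : ∀ K : Finset ℕ, 0 ∉ K → K.card ≤ r - 1 → PK K ∈ W := by
    intro K h0 hc
    exact PK_mem_span r W hPKmem (r - 1 - K.card) K h0 (by omega)
  have hXpow : ∀ m : ℕ, 1 ≤ m → m ≤ r → (X : Polynomial ℝ) ^ m ∈ W :=
    X_pow_mem_span r W hPKall
  -- monomial span
  set mono : Fin r → Polynomial ℝ := fun m => X ^ ((m:ℕ)+1) with hmono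
  have hli : LinearIndependent ℝ mono := by
    rw [Fintype.linearIndependent_iff]
    intro gc hsum i
    have hcg := congrArg (fun p : Polynomial ℝ => p.coeff ((i:ℕ)+1)) hsum
    simp only [finset_sum_coeff, coeff_smul, hmono, coeff_X_pow, coeff_zero, smul_eq_mul] at hcg
    rw [Finset.sum_eq_single i] at hcg
    · simpa using hcg
    · intro m _ hmi
      have : ¬((i:ℕ)+1 = (m:ℕ)+1) := by
        intro hcontra
        exact hmi (Fin.ext (by omega))
      simp [this]
      intro h
      exact absurd (by omega : (i:ℕ)+1 = (m:ℕ)+1) this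
    · simp
  have hVW : Submodule.span ℝ (Set.range mono) ≤ W := by
    rw [Submodule.span_le]
    rintro _ ⟨m, rfl⟩
    exact hXpow ((m:ℕ)+1) (by omega) (by omega)
  have hfinW : FiniteDimensional ℝ W := by
    rw [hW]
    exact FiniteDimensional.span_of_finite ℝ (Set.finite_range _)
  have hrankV : Module.finrank ℝ (Submodule.span ℝ (Set.range mono)) = r := by
    rw [finrank_span_eq_card hli, Fintype.card_fin]
  have hrankW : Module.finrank ℝ W ≤ r := by
    rw [hW]
    refine le_trans (finrank_span_le_card _) ?_
    rw [Set.toFinset_range]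
    exact le_trans (Finset.card_image_le) (by simp)
  have hWV : Submodule.span ℝ (Set.range mono) = W :=
    Submodule.eq_of_le_of_finrank_le hVW (by omega)
  -- G 1 ∈ span mono, so eval 0 = 0
  have hG1 : G 1 ∈ Submodule.span ℝ (Set.range mono) := by
    rw [hWV]
    exact hGmem 1 le_rfl (by omega)
  have hker : Submodule.span ℝ (Set.range mono) ≤ LinearMap.ker (Polynomial.leval (0:ℝ)) := by
    rw [Submodule.span_le]
    rintro _ ⟨m, rfl⟩
    simp only [SetLike.mem_coe, LinearMap.mem_ker, Polynomial.leval_apply, hmono]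
    rw [eval_pow, eval_X]
    exact zero_pow (by omega)
  have hev0 : (G 1).eval 0 = 0 := by
    have := hker hG1
    rwa [LinearMap.mem_ker, Polynomial.leval_apply] at this
  -- compute eval 0
  rw [hG] at hev0
  simp only [] at hev0
  rw [eval_finset_sum] at hev0
  rw [Finset.sum_eq_single 0] at hev0
  · rw [eval_mul, eval_C, descPochhammer_eval_zero] at hev0
    simp at hev0
    exact hev0
  · intro j hj hj0
    rw [eval_mul, eval_C, descPochhammer_eval_zero, if_neg hj0, mul_zero]
  · intro hcontra
    exact absurd (Finset.mem_range.2 (by omega)) hcontra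

noncomputable def Phi (Y w : ℝ → ℝ) : ℕ → ℕ → ℝ → ℝ
  | 0, 0 => Y
  | 0, _+1 => fun _ => 0
  | i+1, 0 => deriv (Phi Y w i 0)
  | i+1, j+1 => deriv (Phi Y w i (j+1)) + deriv w * Phi Y w i j

lemma Phi_contDiffOn {J : Set ℝ} (hJ : IsOpen J) {Y w : ℝ → ℝ}
    (hY : ContDiffOn ℝ (⊤:ℕ∞) Y J) (hw : ContDiffOn ℝ (⊤:ℕ∞) w J) :
    ∀ i j, ContDiffOn ℝ (⊤:ℕ∞) (Phi Y w i j) J := by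
  intro i
  induction i with
  | zero =>
    intro j
    match j with
    | 0 => exact hY
    | j+1 => exact contDiffOn_const
  | succ i ih =>
    intro j
    match j with
    | 0 => exact (ih 0).deriv_of_isOpen hJ (le_of_eq rfl)
    | j+1 =>
      exact ((ih (j+1)).deriv_of_isOpen hJ (le_of_eq rfl)).add
        ((hw.deriv_of_isOpen hJ (le_of_eq rfl)).mul (ih j))

lemma Phi_zero (Y w : ℝ → ℝ) : ∀ i j, i < j → Phi Y w i j = fun _ => 0 := by
  intro i
  induction i with
  | zero =>
    intro j hj
    match j, hj with
    | j+1, _ => rfl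
  | succ i ih =>
    intro j hj
    match j, hj with
    | j+1, hj =>
      show deriv (Phi Y w i (j+1)) + deriv w * Phi Y w i j = fun _ => 0
      rw [ih (j+1) (by omega), ih j (by omega), deriv_const']
      funext x
      simp

lemma Phi_diag (Y w : ℝ → ℝ) : ∀ i, ∀ x, Phi Y w i i x = Y x * (deriv w x) ^ i := by
  intro i
  induction i with
  | zero => intro x; simp [Phi]
  | succ i ih =>
    intro x
    show (deriv (Phi Y w i (i+1)) + deriv w * Phi Y w i i) x = _
    rw [Phi_zero Y w i (i+1) (by omega), deriv_const']
    simp only [Pi.add_apply, Pi.mul_apply, Pi.zero_apply]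
    rw [ih x]
    ring

lemma Phi_one_zero (Y w : ℝ → ℝ) : Phi Y w 1 0 = deriv Y := rfl

lemma Phi_expansion {J : Set ℝ} (hJ : IsOpen J) {Y w : ℝ → ℝ}
    (hY : ContDiffOn ℝ (⊤:ℕ∞) Y J) (hw : ContDiffOn ℝ (⊤:ℕ∞) w J) (k : ℕ) :
    ∀ i, ∀ s ∈ J, iteratedDeriv i (fun x => Y x * w x ^ k) s
      = ∑ j ∈ Finset.range (i+1), (k.descFactorial j : ℝ) * w s ^ (k - j) * Phi Y w i j s := by
  intro i
  induction i with
  | zero =>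
    intro s hs
    simp [Phi]
    ring
  | succ i ih =>
    intro s hs
    rw [iteratedDeriv_succ]
    have h1 : deriv (iteratedDeriv i fun x => Y x * w x ^ k) s
        = deriv (fun x => ∑ j ∈ Finset.range (i+1),
            (k.descFactorial j : ℝ) * w x ^ (k - j) * Phi Y w i j x) s :=
      Filter.EventuallyEq.deriv_eq (Filter.eventuallyEq_of_mem (hJ.mem_nhds hs) ih)
    rw [h1]
    have hdw : HasDerivAt w (deriv w s) s := (differentiableAt_of_contDiffOn hJ hw hs).hasDerivAt
    have hterm : ∀ j ∈ Finset.range (i+1), HasDerivAt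
        (fun x => (k.descFactorial j : ℝ) * w x ^ (k - j) * Phi Y w i j x)
        (((k.descFactorial j : ℝ) * (((k - j : ℕ) : ℝ) * w s ^ (k - j - 1) * deriv w s))
            * Phi Y w i j s
          + ((k.descFactorial j : ℝ) * w s ^ (k - j)) * deriv (Phi Y w i j) s) s := by
      intro j _
      have hP : HasDerivAt (Phi Y w i j) (deriv (Phi Y w i j) s) s :=
        (differentiableAt_of_contDiffOn hJ (Phi_contDiffOn hJ hY hw i j) hs).hasDerivAt
      have hpow : HasDerivAt (fun x => w x ^ (k - j))
          (((k - j : ℕ) : ℝ) * w s ^ (k - j - 1) * deriv w s) s := hdw.pow (k - j)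
      exact (hpow.const_mul ((k.descFactorial j : ℝ))).mul hP
    have hsum : HasDerivAt (fun x => ∑ j ∈ Finset.range (i+1),
          (k.descFactorial j : ℝ) * w x ^ (k - j) * Phi Y w i j x)
        (∑ j ∈ Finset.range (i+1),
          (((k.descFactorial j : ℝ) * (((k - j : ℕ) : ℝ) * w s ^ (k - j - 1) * deriv w s))
            * Phi Y w i j s
          + ((k.descFactorial j : ℝ) * w s ^ (k - j)) * deriv (Phi Y w i j) s)) s :=
      HasDerivAt.fun_sum hterm
    rw [hsum.deriv]
    -- algebra
    have hads : ∀ j : ℕ, (k.descFactorial (j+1) : ℝ) = ((k - j : ℕ) : ℝ) * (k.descFactorial j : ℝ) := by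
      intro j
      rw [Nat.descFactorial_succ]
      push_cast
      ring
    have hLHS : ∑ j ∈ Finset.range (i+1),
          (((k.descFactorial j : ℝ) * (((k - j : ℕ) : ℝ) * w s ^ (k - j - 1) * deriv w s))
            * Phi Y w i j s
          + ((k.descFactorial j : ℝ) * w s ^ (k - j)) * deriv (Phi Y w i j) s)
        = (∑ j ∈ Finset.range (i+1),
            (k.descFactorial (j+1) : ℝ) * w s ^ (k - (j+1)) * (deriv w s * Phi Y w i j s))
          + ∑ j ∈ Finset.range (i+1),
            (k.descFactorial j : ℝ) * w s ^ (k - j) * deriv (Phi Y w i j) s := by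
      rw [← Finset.sum_add_distrib]
      refine Finset.sum_congr rfl fun j _ => ?_
      rw [hads j, Nat.sub_sub]
      ring
    rw [hLHS]
    -- RHS
    rw [Finset.sum_range_succ' (fun j => (k.descFactorial j : ℝ) * w s ^ (k - j)
        * Phi Y w (i+1) j s) (i+1)]
    have hsplit : ∀ j ∈ Finset.range (i+1),
        (k.descFactorial (j+1) : ℝ) * w s ^ (k-(j+1)) * Phi Y w (i+1) (j+1) s
        = (k.descFactorial (j+1) : ℝ) * w s ^ (k-(j+1)) * deriv (Phi Y w i (j+1)) s
          + (k.descFactorial (j+1) : ℝ) * w s ^ (k-(j+1)) * (deriv w s * Phi Y w i j s) := by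
      intro j _
      have hd : Phi Y w (i+1) (j+1) s = deriv (Phi Y w i (j+1)) s + deriv w s * Phi Y w i j s := rfl
      rw [hd]
      ring
    rw [Finset.sum_congr rfl hsplit, Finset.sum_add_distrib]
    have hD : (∑ j ∈ Finset.range (i+1),
          (k.descFactorial (j+1) : ℝ) * w s ^ (k-(j+1)) * deriv (Phi Y w i (j+1)) s)
          + (k.descFactorial 0 : ℝ) * w s ^ (k - 0) * Phi Y w (i+1) 0 s
        = ∑ j ∈ Finset.range (i+1),
            (k.descFactorial j : ℝ) * w s ^ (k - j) * deriv (Phi Y w i j) s := by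
      have h0 : Phi Y w (i+1) 0 s = deriv (Phi Y w i 0) s := rfl
      rw [h0]
      rw [← Finset.sum_range_succ' (fun j => (k.descFactorial j : ℝ) * w s ^ (k - j)
        * deriv (Phi Y w i j) s) (i+1)]
      rw [Finset.sum_range_succ]
      have hzero : deriv (Phi Y w i (i+1)) s = 0 := by
        rw [Phi_zero Y w i (i+1) (by omega), deriv_const']
      rw [hzero]
      ring
    rw [add_right_comm, hD]
    ring

lemma zero_sol (r : ℕ) (a : ℕ → ℝ → ℝ) (I : Set ℝ) :
    IsSolODE r a (fun _ => 0) I (fun _ => 0) := by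
  refine ⟨contDiffOn_const, fun t _ => ?_⟩
  rw [odeLHS]
  simp [iteratedDeriv_zero_fun]

lemma exp_sol (r : ℕ) (hr : 1 ≤ r) (K : Finset ℕ) (hcard : K.card = r - 1)
    (I : Set ℝ) {ν : ℕ} (hν : ν ∈ insert 0 K) :
    IsSolODE r (fun i _ => (PK K).coeff i) (fun _ => 0) I (fun t => Real.exp (ν * t)) := by
  constructor
  · exact (Real.contDiff_exp.comp (contDiff_const.mul contDiff_id)).contDiffOn
  · intro t _
    rw [odeLHS]
    simp only [iteratedDeriv_exp_mul]
    have hdeg : (PK K).natDegree = r := by rw [PK_natDegree]; omega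
    have heval : (PK K).eval ((ν:ℕ):ℝ) = 0 := by
      rcases Finset.mem_insert.1 hν with h | h
      · rw [h]; simpa using PK_eval_zero K
      · exact PK_eval_mem K h
    have hcr : (PK K).coeff r = 1 := by
      have := (PK_monic K).coeff_natDegree
      rwa [hdeg] at this
    have hsum := Polynomial.eval_eq_sum_range (p := PK K) ((ν:ℕ):ℝ)
    rw [hdeg, Finset.sum_range_succ, hcr, one_mul] at hsum
    have hzero : (∑ i ∈ Finset.range r, (PK K).coeff i * ((ν:ℕ):ℝ) ^ i) + ((ν:ℕ):ℝ) ^ r = 0 := by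
      rw [← hsum]; exact heval
    have hfact : ((ν:ℕ):ℝ) ^ r * Real.exp (ν * t)
        + ∑ i ∈ Finset.range r, (PK K).coeff i * (((ν:ℕ):ℝ) ^ i * Real.exp (ν * t))
        = ((∑ i ∈ Finset.range r, (PK K).coeff i * ((ν:ℕ):ℝ) ^ i) + ((ν:ℕ):ℝ) ^ r)
          * Real.exp (ν * t) := by
      conv_rhs => rw [add_mul, Finset.sum_mul]
      rw [add_comm]
      congr 1
      refine Finset.sum_congr rfl fun i _ => ?_
      ring
    rw [hfact, hzero, zero_mul]

/-- if a fiber-preserving transformation `t̃ = T(t)`, `x̃ = X₁(t)x + X₀(t)`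
with `T' X₁ ≠ 0` maps every `r`-th order (`r ≥ 2`) linear ODE of first Arnold form
(`a₀ ≡ 0`) on `I` to an equation of first Arnold form on `T(I)`, then `X₁` is a nonzero
constant. -/
theorem stmt11 (r : ℕ) (hr : 2 ≤ r) (I : Set ℝ) (hI : IsOpenInterval I)
    (T X₁ X₀ : ℝ → ℝ)
    (hT : ContDiffOn ℝ (⊤ : ℕ∞) T I) (hX₁ : ContDiffOn ℝ (⊤ : ℕ∞) X₁ I) (hX₀ : ContDiffOn ℝ (⊤ : ℕ∞) X₀ I)
    (hTX : ∀ t ∈ I, deriv T t * X₁ t ≠ 0)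
    (hmaps : ∀ (a : ℕ → ℝ → ℝ) (b : ℝ → ℝ),
      (∀ i, ContDiffOn ℝ (⊤ : ℕ∞) (a i) I) → ContDiffOn ℝ (⊤ : ℕ∞) b I →
      (∀ t ∈ I, a 0 t = 0) →
      ∃ (a' : ℕ → ℝ → ℝ) (b' : ℝ → ℝ),
        (∀ i, ContDiffOn ℝ (⊤ : ℕ∞) (a' i) (T '' I)) ∧ ContDiffOn ℝ (⊤ : ℕ∞) b' (T '' I) ∧
        (∀ s ∈ T '' I, a' 0 s = 0) ∧
        FPMapsODE r I a b a' b' T X₁ X₀) :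
    ∃ C : ℝ, C ≠ 0 ∧ ∀ t ∈ I, X₁ t = C := by
  obtain ⟨hIopen, hIord, hInem⟩ := hI
  have hT0 : ∀ t ∈ I, deriv T t ≠ 0 := fun t ht h => hTX t ht (by rw [h]; ring)
  have hX10 : ∀ t ∈ I, X₁ t ≠ 0 := fun t ht h => hTX t ht (by rw [h]; ring)
  -- J := T '' I is open
  have hJopen : IsOpen (T '' I) := by
    rw [isOpen_iff_mem_nhds]
    rintro s ⟨t, ht, rfl⟩
    have hct : ContDiffAt ℝ (⊤:ℕ∞) T t := hT.contDiffAt (hIopen.mem_nhds ht)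
    have hst : HasStrictDerivAt T (deriv T t) t := hct.hasStrictDerivAt (by simp)
    rw [← hst.map_nhds_eq (hT0 t ht)]
    exact Filter.image_mem_map (hIopen.mem_nhds ht)
  -- family construction
  have hfam : ∀ K : Finset ℕ, 0 ∉ K → K.card = r - 1 →
      ∃ (a' : ℕ → ℝ → ℝ) (z : ℕ → ℝ → ℝ),
        (∀ s ∈ T '' I, a' 0 s = 0) ∧
        ∀ ν ∈ insert 0 K,
          ContDiffOn ℝ (⊤:ℕ∞) (z ν) (T '' I) ∧
          (∀ s ∈ T '' I, iteratedDeriv r (z ν) s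
              + ∑ i ∈ Finset.range r, a' i s * iteratedDeriv i (z ν) s = 0) ∧
          (∀ t ∈ I, z ν (T t) = X₁ t * Real.exp (ν * t)) := by
    intro K h0K hcard
    obtain ⟨a', b', ha', hb', ha'0, hFP⟩ := hmaps (fun i _ => (PK K).coeff i) (fun _ => 0)
      (fun i => contDiffOn_const) contDiffOn_const
      (fun t _ => by show (PK K).coeff 0 = 0; rw [coeff_zero_eq_eval_zero, PK_eval_zero])
    obtain ⟨y0, hy0sol, hy0tr⟩ := hFP _ (zero_sol r _ I)
    choose! yv hyvsol hyvtr using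
      fun (ν : ℕ) (hν : ν ∈ insert 0 K) => hFP _ (exp_sol r (by omega) K hcard I hν)
    refine ⟨a', fun ν s => yv ν s - y0 s, ha'0, ?_⟩
    intro ν hν
    have hys := hyvsol ν hν
    refine ⟨hys.1.sub hy0sol.1, ?_, ?_⟩
    · intro s hsJ
      have h1 := hys.2 s hsJ
      have h2 := hy0sol.2 s hsJ
      rw [odeLHS] at h1 h2
      have hsub : ∀ i, iteratedDeriv i (fun u => yv ν u - y0 u) s
          = iteratedDeriv i (yv ν) s - iteratedDeriv i y0 s :=
        fun i => iteratedDeriv_sub_of_open hJopen hys.1 hy0sol.1 i s hsJ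
      have hkey : iteratedDeriv r (fun u => yv ν u - y0 u) s
          + ∑ i ∈ Finset.range r, a' i s * iteratedDeriv i (fun u => yv ν u - y0 u) s
          = (iteratedDeriv r (yv ν) s + ∑ i ∈ Finset.range r, a' i s * iteratedDeriv i (yv ν) s)
            - (iteratedDeriv r y0 s + ∑ i ∈ Finset.range r, a' i s * iteratedDeriv i y0 s) := by
        rw [hsub r, Finset.sum_congr rfl (fun i _ => by rw [hsub i, mul_sub]),
          Finset.sum_sub_distrib]
        ring
      rw [hkey, h1, h2, sub_self]
    · intro t ht
      have hv := hyvtr ν hν t ht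
      have h0 := hy0tr t ht
      show yv ν (T t) - y0 (T t) = X₁ t * Real.exp (ν * t)
      rw [hv, h0]
      ring
  -- base family: define Y and w
  set K₀ : Finset ℕ := Finset.Icc 1 (r-1) with hK₀
  have h0K₀ : 0 ∉ K₀ := by simp [hK₀]
  have hcard₀ : K₀.card = r - 1 := by rw [hK₀, Nat.card_Icc]; omega
  obtain ⟨a₀', z₀, ha₀'0, hz₀⟩ := hfam K₀ h0K₀ hcard₀
  have h1K₀ : (1:ℕ) ∈ insert 0 K₀ := by
    refine Finset.mem_insert_of_mem ?_
    rw [hK₀]; simp; omega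
  have h0K₀' : (0:ℕ) ∈ insert 0 K₀ := Finset.mem_insert_self 0 K₀
  obtain ⟨hY0sm, _, hY0tr⟩ := hz₀ 0 h0K₀'
  obtain ⟨hz1sm, _, hz1tr⟩ := hz₀ 1 h1K₀
  set Y : ℝ → ℝ := z₀ 0 with hYdef
  have hYT : ∀ t ∈ I, Y (T t) = X₁ t := by
    intro t ht
    rw [hY0tr t ht]
    norm_num
  have hYne : ∀ s ∈ T '' I, Y s ≠ 0 := by
    rintro s ⟨t, ht, rfl⟩
    rw [hYT t ht]
    exact hX10 t ht
  set w : ℝ → ℝ := fun s => z₀ 1 s / Y s with hwdef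
  have hwsm : ContDiffOn ℝ (⊤:ℕ∞) w (T '' I) := hz1sm.div hY0sm hYne
  have hwT : ∀ t ∈ I, w (T t) = Real.exp t := by
    intro t ht
    show z₀ 1 (T t) / Y (T t) = Real.exp t
    rw [hz1tr t ht, hYT t ht, mul_comm, mul_div_assoc, div_self (hX10 t ht), mul_one]
    norm_num
  have hwne : ∀ s ∈ T '' I, w s ≠ 0 := by
    rintro s ⟨t, ht, rfl⟩
    rw [hwT t ht]
    exact Real.exp_ne_zero t
  have hdw : ∀ s ∈ T '' I, deriv w s ≠ 0 := by
    rintro s ⟨t, ht, rfl⟩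
    have hwd : HasDerivAt w (deriv w (T t)) (T t) :=
      (differentiableAt_of_contDiffOn hJopen hwsm (Set.mem_image_of_mem T ht)).hasDerivAt
    have hTd : HasDerivAt T (deriv T t) t :=
      (differentiableAt_of_contDiffOn hIopen hT ht).hasDerivAt
    have hcomp : HasDerivAt (w ∘ T) (deriv w (T t) * deriv T t) t := hwd.comp t hTd
    have hev : deriv (w ∘ T) t = Real.exp t := by
      have heq : (w ∘ T) =ᶠ[nhds t] Real.exp :=
        Filter.eventuallyEq_of_mem (hIopen.mem_nhds ht) (fun u hu => hwT u hu)
      rw [heq.deriv_eq, Real.deriv_exp]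
    have : deriv w (T t) * deriv T t = Real.exp t := by rw [← hcomp.deriv, hev]
    intro hzero
    rw [hzero, zero_mul] at this
    exact Real.exp_ne_zero t this.symm
  -- deriv Y = 0 on J
  have hYderiv : ∀ s ∈ T '' I, deriv Y s = 0 := by
    intro s hsJ
    have hdiag : Phi Y w r r s ≠ 0 := by
      rw [Phi_diag]
      exact mul_ne_zero (hYne s hsJ) (pow_ne_zero _ (hdw s hsJ))
    have hcore := core_lemma r hr (fun i j => Phi Y w i j s) (w s) (hwne s hsJ)
      (fun i j hij => by show Phi Y w i j s = 0; rw [Phi_zero Y w i j hij]) hdiag ?_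
    · rw [← Phi_one_zero Y w]
      exact hcore
    -- the constraint hypothesis
    intro K h0K hcard
    obtain ⟨a', z, ha'0, hz⟩ := hfam K h0K hcard
    refine ⟨fun i => if i = r then 1 else a' i s, by simp, ?_⟩
    intro ν hν
    obtain ⟨hzsm, hzode, hztr⟩ := hz ν hν
    have hzY : ∀ s' ∈ T '' I, z ν s' = Y s' * w s' ^ ν := by
      rintro s' ⟨t', ht', rfl⟩
      rw [hztr t' ht', hYT t' ht', hwT t' ht', Real.exp_nat_mul]
    have hE : ∀ i, i ≤ r → iteratedDeriv i (z ν) s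
        = ∑ j ∈ Finset.range (r+1), (ν.descFactorial j : ℝ) * w s ^ (ν - j) * Phi Y w i j s := by
      intro i hi
      rw [iteratedDeriv_congr_of_open hJopen hzY i hsJ,
        Phi_expansion hJopen hY0sm hwsm ν i s hsJ]
      refine Finset.sum_subset ?_ ?_
      · intro x hx
        simp only [Finset.mem_range] at hx ⊢
        omega
      · intro j hj hj2
        simp only [Finset.mem_range] at hj hj2
        rw [Phi_zero Y w i j (by omega)]
        simp
    have hode := hzode s hsJ
    -- rewrite the ODE as a sum over Icc 1 r
    have hsplit : Finset.range r = insert 0 (Finset.Icc 1 (r-1)) := by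
      ext x; simp [Finset.mem_Icc]; omega
    have hIcc : Finset.Icc 1 r = insert r (Finset.Icc 1 (r-1)) := by
      ext x; simp [Finset.mem_Icc]; omega
    have h0n : (0:ℕ) ∉ Finset.Icc 1 (r-1) := by simp
    have hrn : r ∉ Finset.Icc 1 (r-1) := by simp [Finset.mem_Icc]; omega
    have hstep1 : ∑ i ∈ Finset.Icc 1 r, (if i = r then (1:ℝ) else a' i s) * iteratedDeriv i (z ν) s
        = 0 := by
      rw [hIcc, Finset.sum_insert hrn]
      rw [if_pos rfl, one_mul]
      have : ∑ i ∈ Finset.Icc 1 (r-1), (if i = r then (1:ℝ) else a' i s) * iteratedDeriv i (z ν) s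
          = ∑ i ∈ Finset.Icc 1 (r-1), a' i s * iteratedDeriv i (z ν) s := by
        refine Finset.sum_congr rfl fun i hi => ?_
        simp only [Finset.mem_Icc] at hi
        rw [if_neg (by omega)]
      rw [this]
      have hr2 : ∑ i ∈ Finset.range r, a' i s * iteratedDeriv i (z ν) s
          = ∑ i ∈ Finset.Icc 1 (r-1), a' i s * iteratedDeriv i (z ν) s := by
        rw [hsplit, Finset.sum_insert h0n, ha'0 s hsJ, zero_mul, zero_add]
      rw [← hr2]
      exact hode
    -- substitute the expansions and swap sums
    have hstep2 : ∑ i ∈ Finset.Icc 1 r, (if i = r then (1:ℝ) else a' i s) * iteratedDeriv i (z ν) s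
        = ∑ j ∈ Finset.range (r+1), (ν.descFactorial j : ℝ) * w s ^ (ν - j)
            * (∑ i ∈ Finset.Icc 1 r, (if i = r then (1:ℝ) else a' i s) * Phi Y w i j s) := by
      rw [Finset.sum_congr rfl (fun i hi => by
        rw [hE i (by simp only [Finset.mem_Icc] at hi; omega), Finset.mul_sum])]
      rw [Finset.sum_comm]
      refine Finset.sum_congr rfl fun j _ => ?_
      rw [Finset.mul_sum]
      refine Finset.sum_congr rfl fun i _ => ?_
      ring
    rw [← hstep2]
    exact hstep1
  -- Y is constant on J, hence X₁ is constant
  have hJconv : Convex ℝ (T '' I) := by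
    have hIconv : Convex ℝ I := convex_iff_ordConnected.mpr hIord
    have hJpre : IsPreconnected (T '' I) := hIconv.isPreconnected.image T hT.continuousOn
    exact convex_iff_ordConnected.mpr hJpre.ordConnected
  have hYdiff : DifferentiableOn ℝ Y (T '' I) := fun s hs =>
    (differentiableAt_of_contDiffOn hJopen hY0sm hs).differentiableWithinAt
  have hconst : ∀ x ∈ T '' I, ∀ y ∈ T '' I, Y x = Y y := by
    intro x hx y hy
    refine hJconv.is_const_of_fderivWithin_eq_zero hYdiff ?_ hx hy
    intro u hu
    rw [fderivWithin_of_isOpen hJopen hu]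
    refine ContinuousLinearMap.ext_ring ?_
    have : fderiv ℝ Y u 1 = deriv Y u := rfl
    rw [this, hYderiv u hu]
    simp
  obtain ⟨t₀, ht₀⟩ := hInem
  refine ⟨X₁ t₀, hX10 t₀ ht₀, ?_⟩
  intro t ht
  have h1 : X₁ t = Y (T t) := (hYT t ht).symm
  have h2 : X₁ t₀ = Y (T t₀) := (hYT t₀ ht₀).symm
  rw [h1, h2]
  exact hconst _ (Set.mem_image_of_mem T ht) _ (Set.mem_image_of_mem T ht₀)
end

section
/- Let r ≥ 3 and let c₀, …, c_{r−3} be real constants. Then there exist real constants d₀, …, d_{r−3}, depending only on r and c₀, …, c_{r−3}, such that for every solution x : (0, ∞) → ℝ of the Euler-type equation x^{(r)}(t) + c_{r−3}t^{−3}x^{(r−3)}(t) + ⋯ + c₁t^{−r+1}x'(t) + c₀t^{−r}x(t) = 0, the function y : ℝ → ℝ defined by y(s) = e^{−(r−1)s/2}·x(e^{s}) satisfies the constant-coefficient equation y^{(r)}(s) − (r(r²−1)/24)·y^{(r−2)}(s) + d_{r−3}y^{(r−3)}(s) + ⋯ + d₁y'(s) + d₀y(s) = 0 for all s ∈ ℝ.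 (The point transformation t̃ = ln t, x̃ = x·t^{−(r−1)/2} maps the Euler–Cauchy equation in Laguerre–Forsyth form to a constant-coefficient equation in rational form with a_{r−2} = −r(r²−1)/24.) -/
open Set

namespace Stmt16Aux

/-- The coefficient matrix of the substitution: `(d/ds)^n (e^{ls} x(e^s)) =
∑_k A l n k e^{(l+k)s} x^{(k)}(e^s)`. -/
noncomputable def A (l : ℝ) : ℕ → ℕ → ℝ
  | 0, k => if k = 0 then 1 else 0
  | n+1, k => (l + k) * A l n k + (if k = 0 then 0 else A l n (k-1))

lemma A_zero (l : ℝ) : ∀ {n k : ℕ}, n < k → A l n k = 0 := by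
  intro n
  induction n with
  | zero => intro k hk; simp only [A, ite_eq_right_iff]; omega
  | succ n ih =>
    intro k hk
    have h1 : A l n k = 0 := ih (by omega)
    have h2 : (if k = 0 then 0 else A l n (k-1)) = 0 := by
      split
      · rfl
      · exact ih (by omega)
    simp [A, h1, h2]

lemma A_diag (l : ℝ) : ∀ n, A l n n = 1 := by
  intro n
  induction n with
  | zero => simp [A]
  | succ n ih =>
    have h1 : A l n (n+1) = 0 := A_zero l (by omega)
    simp [A, h1, ih]

lemma A_sub1 (l : ℝ) : ∀ n : ℕ, A l (n+1) n = (n+1) * l + n*(n+1)/2 := by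
  intro n
  induction n with
  | zero => simp [A]
  | succ n ih =>
    show (l + (↑(n+1) : ℝ)) * A l (n+1) (n+1) + A l (n+1) n = _
    rw [A_diag, ih]
    push_cast
    ring

lemma A_sub2 (l : ℝ) : ∀ n : ℕ, A l (n+2) n
    = (n+1)*(n+2)/2 * l^2 + n*(n+1)*(n+2)/2 * l + n*(n+1)*(n+2)*(3*n+1)/24 := by
  intro n
  induction n with
  | zero => simp [A]; ring
  | succ n ih =>
    show (l + (↑(n+1) : ℝ)) * A l (n+2) (n+1) + A l (n+2) n = _
    rw [A_sub1, ih]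
    push_cast
    ring

/-- The coefficients of the constant-coefficient equation, obtained by
back-substitution in the triangular system. -/
noncomputable def Ev (l : ℝ) (r : ℕ) (q : ℕ → ℝ) : ℕ → ℝ
  | 0 => 1
  | j+1 => q (r-1-j) - ∑ i ∈ (Finset.range (j+1)).attach,
      Ev l r q i.1 * A l (r - i.1) (r-1-j)
  decreasing_by exact Finset.mem_range.mp i.2

lemma Ev_succ (l : ℝ) (r : ℕ) (q : ℕ → ℝ) (j : ℕ) :
    Ev l r q (j+1) = q (r-1-j) - ∑ i ∈ Finset.range (j+1),
      Ev l r q i * A l (r - i) (r-1-j) := by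
  rw [Ev, ← Finset.sum_attach (Finset.range (j+1)) (fun i => Ev l r q i * A l (r - i) (r-1-j))]

lemma Ev_zero (l : ℝ) (r : ℕ) (q : ℕ → ℝ) : Ev l r q 0 = 1 := by rw [Ev]

lemma coeff (l : ℝ) (r : ℕ) (q : ℕ → ℝ) (hq : q r = 1) :
    ∀ k ≤ r, ∑ n ∈ Finset.range (r+1), Ev l r q (r - n) * A l n k = q k := by
  intro k hk
  have hrefl : ∑ n ∈ Finset.range (r+1), Ev l r q (r - n) * A l n k
      = ∑ i ∈ Finset.range (r+1), Ev l r q i * A l (r - i) k := by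
    rw [← Finset.sum_range_reflect (fun i => Ev l r q i * A l (r - i) k) (r+1)]
    apply Finset.sum_congr rfl
    intro n hn
    have hn' : n ≤ r := by simpa [Nat.lt_succ_iff] using hn
    congr 2
    omega
  rw [hrefl]
  have hsub : ∑ i ∈ Finset.range (r+1), Ev l r q i * A l (r - i) k
      = ∑ i ∈ Finset.range (r - k + 1), Ev l r q i * A l (r - i) k := by
    symm
    apply Finset.sum_subset
    · intro i hi; simp at hi ⊢; omega
    · intro i hi hi'
      simp at hi hi'
      rw [A_zero l (by omega), mul_zero]
  rw [hsub]
  rcases eq_or_lt_of_le hk with rfl | hlt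
  · simp [Ev, A_diag, hq]
  · obtain ⟨j, hj1, hj2⟩ : ∃ j, r - 1 - j = k ∧ r - k = j + 1 := ⟨r - 1 - k, by omega, by omega⟩
    rw [hj2, Finset.sum_range_succ]
    have hk' : r - (j+1) = k := by omega
    rw [hk', A_diag, mul_one, Ev_succ, hj1]
    ring

end Stmt16Aux

open Stmt16Aux in
theorem stmt16 (r : ℕ) (hr : 3 ≤ r) (c : ℕ → ℝ) :
    ∃ d : ℕ → ℝ, ∀ x : ℝ → ℝ,
      ContDiffOn ℝ (⊤ : ℕ∞) x (Ioi 0) →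
      (∀ t ∈ Ioi (0 : ℝ), iteratedDeriv r x t
        + ∑ i ∈ Finset.range (r - 2), c i / t ^ (r - i) * iteratedDeriv i x t = 0) →
      ∀ y : ℝ → ℝ,
        (∀ s : ℝ, y s = Real.exp (-(((r : ℝ) - 1) * s / 2)) * x (Real.exp s)) →
        ∀ s : ℝ, iteratedDeriv r y s
          - (r : ℝ) * ((r : ℝ) ^ 2 - 1) / 24 * iteratedDeriv (r - 2) y s
          + ∑ i ∈ Finset.range (r - 2), d i * iteratedDeriv i y s = 0 := by
  obtain ⟨m, rfl⟩ : ∃ m, r = m + 3 := ⟨r - 3, by omega⟩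
  set r := m + 3 with hrdef
  set l : ℝ := -((r : ℝ) - 1) / 2 with hl
  set q : ℕ → ℝ := fun k => if k = r then 1 else if k < r - 2 then c k else 0 with hq
  have hq1 : q r = 1 := by simp [hq]
  set E : ℕ → ℝ := Ev l r q with hE
  -- the three top coefficients
  have hE0 : E 0 = 1 := by rw [hE, Ev_zero]
  have hE1 : E 1 = 0 := by
    rw [hE, Ev_succ]
    have h1 : r - 1 - 0 = m + 2 := by omega
    have h2 : q (m+2) = 0 := by simp [hq, hrdef]
    rw [h1, h2]
    rw [Finset.sum_range_one]
    have h3 : r - 0 = (m+2) + 1 := by omega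
    rw [h3, A_sub1, ← hE, hE0, hl, hrdef]
    push_cast
    ring
  have hE2 : E 2 = -((r : ℝ) * ((r : ℝ) ^ 2 - 1) / 24) := by
    rw [hE, Ev_succ]
    have h1 : r - 1 - 1 = m + 1 := by omega
    have h2 : q (m+1) = 0 := by simp [hq, hrdef]
    rw [h1, h2, Finset.sum_range_succ, Finset.sum_range_one]
    have h3 : r - 0 = (m+1) + 2 := by omega
    rw [h3, A_sub2]
    have h4 : (Ev l r q 1 : ℝ) = 0 := by rw [← hE]; exact hE1
    rw [h4, zero_mul, add_zero, ← hE, hE0, hl, hrdef]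
    push_cast
    ring
  refine ⟨fun i => E (r - i), ?_⟩
  intro x hx hode y hy s
  have hxk : ∀ k : ℕ, ContDiffOn ℝ (⊤ : ℕ∞) (iteratedDeriv k x) (Ioi 0) := by
    intro k
    induction k with
    | zero => simpa [iteratedDeriv_zero] using hx
    | succ k ih =>
      rw [iteratedDeriv_succ]
      exact ih.deriv_of_isOpen isOpen_Ioi (le_of_eq rfl)
  have hder : ∀ (k : ℕ) (u : ℝ), u ∈ Ioi (0:ℝ) →
      HasDerivAt (iteratedDeriv k x) (iteratedDeriv (k+1) x u) u := by
    intro k u hu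
    have hdiff : DifferentiableAt ℝ (iteratedDeriv k x) u :=
      ((hxk k).differentiableOn (by simp)).differentiableAt
        (isOpen_Ioi.mem_nhds hu)
    rw [iteratedDeriv_succ]
    exact hdiff.hasDerivAt
  have hy' : ∀ s : ℝ, y s = Real.exp (l * s) * x (Real.exp s) := by
    intro s; rw [hy s, hl]; ring_nf
  have key : ∀ n : ℕ, ∀ s : ℝ, iteratedDeriv n y s
      = ∑ k ∈ Finset.range (n+1), A l n k *
          (Real.exp ((l + k) * s) * iteratedDeriv k x (Real.exp s)) := by
    intro n
    induction n with
    | zero =>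
      intro s
      simp [A, hy' s]
    | succ n ih =>
      intro s
      have hfun : iteratedDeriv n y = fun t => ∑ k ∈ Finset.range (n+1), A l n k *
          (Real.exp ((l + k) * t) * iteratedDeriv k x (Real.exp t)) := funext ih
      rw [iteratedDeriv_succ, hfun]
      have hterm : ∀ k ∈ Finset.range (n+1), HasDerivAt
          (fun t => A l n k * (Real.exp ((l + k) * t) * iteratedDeriv k x (Real.exp t)))
          (A l n k * ((l + k) * (Real.exp ((l + k) * s) * iteratedDeriv k x (Real.exp s))
            + Real.exp ((l + (k+1:ℕ)) * s) * iteratedDeriv (k+1) x (Real.exp s))) s := by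
        intro k _
        have h1 : HasDerivAt (fun t : ℝ => Real.exp ((l + k) * t))
            (Real.exp ((l + k) * s) * ((l + k) * 1)) s :=
          HasDerivAt.exp ((hasDerivAt_id s).const_mul (l + k))
        have h2 : HasDerivAt (fun t : ℝ => iteratedDeriv k x (Real.exp t))
            (iteratedDeriv (k+1) x (Real.exp s) * Real.exp s) s :=
          (hder k (Real.exp s) (Real.exp_pos s)).comp s (Real.hasDerivAt_exp s)
        have h3 := (h1.mul h2).const_mul (A l n k)
        convert h3 using 1
        · rfl
        · rfl
        · rfl
        have hxp : Real.exp ((l + (↑(k+1):ℝ)) * s) = Real.exp ((l + k) * s) * Real.exp s := by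
          rw [← Real.exp_add]
          congr 1
          push_cast
          ring
        rw [hxp]
        ring
      rw [HasDerivAt.deriv (HasDerivAt.fun_sum hterm)]
      set T : ℕ → ℝ := fun k => Real.exp ((l + k) * s) * iteratedDeriv k x (Real.exp s) with hT
      show ∑ k ∈ Finset.range (n+1), A l n k * ((l + k) * T k + T (k+1))
          = ∑ k ∈ Finset.range (n+2), A l (n+1) k * T k
      have expand : ∀ k : ℕ, A l (n+1) k
          = (l + k) * A l n k + (if k = 0 then 0 else A l n (k-1)) := fun k => rfl
      calc ∑ k ∈ Finset.range (n+1), A l n k * ((l + k) * T k + T (k+1))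
          = (∑ k ∈ Finset.range (n+1), (l + k) * A l n k * T k)
            + ∑ k ∈ Finset.range (n+1), A l n k * T (k+1) := by
            rw [← Finset.sum_add_distrib]; apply Finset.sum_congr rfl; intros; ring
        _ = (∑ k ∈ Finset.range (n+2), (l + k) * A l n k * T k)
            + ∑ k ∈ Finset.range (n+2), (if k = 0 then 0 else A l n (k-1)) * T k := by
            congr 1
            · symm
              rw [Finset.sum_range_succ, A_zero l (Nat.lt_succ_self n)]
              simp
            · symm
              rw [Finset.sum_range_succ']
              simp
        _ = ∑ k ∈ Finset.range (n+2), A l (n+1) k * T k := by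
            rw [← Finset.sum_add_distrib]
            apply Finset.sum_congr rfl
            intro k _
            rw [expand]
            ring
  set u : ℝ := Real.exp s with hu
  have hu0 : u ∈ Ioi (0:ℝ) := Real.exp_pos s
  have hode' : ∑ k ∈ Finset.range (r+1), q k * (u ^ k * iteratedDeriv k x u) = 0 := by
    have h0 := hode u hu0
    have hmul : u ^ r * (iteratedDeriv r x u
        + ∑ i ∈ Finset.range (r - 2), c i / u ^ (r - i) * iteratedDeriv i x u) = 0 := by
      rw [h0, mul_zero]
    have hexp : u ^ r * (iteratedDeriv r x u
        + ∑ i ∈ Finset.range (r - 2), c i / u ^ (r - i) * iteratedDeriv i x u)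
        = u ^ r * iteratedDeriv r x u
          + ∑ i ∈ Finset.range (r - 2), c i * (u ^ i * iteratedDeriv i x u) := by
      rw [mul_add, Finset.mul_sum]
      congr 1
      apply Finset.sum_congr rfl
      intro i hi
      have hir : i ≤ r := by simp at hi; omega
      have hpow : u ^ r = u ^ (r - i) * u ^ i := by
        rw [← pow_add]; congr 1; omega
      have hne : u ^ (r - i) ≠ 0 := pow_ne_zero _ (ne_of_gt hu0)
      rw [hpow]
      field_simp
    rw [Finset.sum_range_succ, hq1, one_mul]
    have hrest : ∑ k ∈ Finset.range r, q k * (u ^ k * iteratedDeriv k x u)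
        = ∑ i ∈ Finset.range (r - 2), c i * (u ^ i * iteratedDeriv i x u) := by
      symm
      apply Finset.sum_subset_zero_on_sdiff
      · intro i hi; simp at hi ⊢; omega
      · intro i hi
        simp only [Finset.mem_sdiff, Finset.mem_range] at hi
        obtain ⟨hi1, hi2⟩ := hi
        have : q i = 0 := by
          simp only [hq, if_neg (show ¬ i = r by omega), if_neg (show ¬ i < r - 2 by omega)]
        rw [this, zero_mul]
      · intro i hi
        simp only [Finset.mem_range] at hi
        have : q i = c i := by
          simp only [hq, if_neg (show ¬ i = r by omega), if_pos hi]
        rw [this]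
    rw [hrest]
    linarith [hexp, hmul]
  have hbig : ∑ n ∈ Finset.range (r+1), E (r - n) * iteratedDeriv n y s = 0 := by
    have step1 : ∀ n ∈ Finset.range (r+1), E (r - n) * iteratedDeriv n y s
        = ∑ k ∈ Finset.range (r+1), E (r - n) * (A l n k *
            (Real.exp ((l + k) * s) * iteratedDeriv k x u)) := by
      intro n hn
      simp only [Finset.mem_range] at hn
      rw [key n s, Finset.mul_sum]
      apply Finset.sum_subset
      · intro k hk; simp at hk ⊢; omega
      · intro k hk hk'
        simp only [Finset.mem_range] at hk hk'
        rw [A_zero l (by omega), zero_mul, mul_zero]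
    rw [Finset.sum_congr rfl step1, Finset.sum_comm]
    have step2 : ∀ k ∈ Finset.range (r+1),
        (∑ n ∈ Finset.range (r+1), E (r - n) * (A l n k *
            (Real.exp ((l + k) * s) * iteratedDeriv k x u)))
        = q k * (u ^ k * iteratedDeriv k x u) * Real.exp (l * s) := by
      intro k hk
      simp only [Finset.mem_range] at hk
      have hcol : ∑ n ∈ Finset.range (r+1), E (r - n) * (A l n k *
            (Real.exp ((l + k) * s) * iteratedDeriv k x u))
          = (∑ n ∈ Finset.range (r+1), E (r - n) * A l n k) *
            (Real.exp ((l + k) * s) * iteratedDeriv k x u) := by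
        rw [Finset.sum_mul]
        apply Finset.sum_congr rfl
        intros; ring
      rw [hcol, hE, coeff l r q hq1 k (by omega)]
      have hxp : Real.exp ((l + k) * s) = Real.exp (l * s) * u ^ k := by
        rw [hu, ← Real.exp_nat_mul, ← Real.exp_add]
        congr 1
        ring
      rw [hxp]
      ring
    rw [Finset.sum_congr rfl step2, ← Finset.sum_mul, hode', zero_mul]
  have hsplit : ∑ n ∈ Finset.range (r+1), E (r - n) * iteratedDeriv n y s
      = (∑ n ∈ Finset.range (r-2), E (r - n) * iteratedDeriv n y s)
        + E 2 * iteratedDeriv (r-2) y s + E 1 * iteratedDeriv (r-1) y s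
        + E 0 * iteratedDeriv r y s := by
    show ∑ n ∈ Finset.range (m+4), E (r - n) * iteratedDeriv n y s = _
    rw [Finset.sum_range_succ, Finset.sum_range_succ, Finset.sum_range_succ]
    have e1 : r - (m+3) = 0 := by omega
    have e2 : r - (m+2) = 1 := by omega
    have e3 : r - (m+1) = 2 := by omega
    have e4 : r - 2 = m + 1 := by omega
    have e5 : r - 1 = m + 2 := by omega
    rw [e1, e2, e3, e4, e5]
  rw [hsplit, hE0, hE1, hE2] at hbig
  have hgoal : iteratedDeriv r y s
      - (r : ℝ) * ((r : ℝ) ^ 2 - 1) / 24 * iteratedDeriv (r - 2) y s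
      + ∑ i ∈ Finset.range (r - 2), E (r - i) * iteratedDeriv i y s = 0 := by
    linarith [hbig]
  exact hgoal
end
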